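/- Let v = (v_x, v_y) be a unit vector with v_y ≠ 0, and let p, q ∈ ℝ² with ‖p − q‖ = r₁ > 0 such that p lies on the x-axis and q lies on the line spanned by v. Let P = r₁·[[v_x/v_y, 1],[0,0]] and Q = Pᵀ. Then there exists a unit vector x ∈ ℝ² such that p = Px and q = Qx. -/

import Mathlib

/-- Converse direction: if `p` lies on the `x`-axis and `q` on the line
spanned by the unit vector `v` (with `v_y ≠ 0`), `‖p − q‖ = r₁ > 0`,
`P = r₁ • [[v_x/v_y, 1],[0,0]]` and `Q = Pᵀ`, then there is a unit vector `x`
with `p = P x` and `q = Q x`. -/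
theorem stmt14 (v p q : EuclideanSpace ℝ (Fin 2))
    (hv : ‖v‖ = 1) (hvy : v 1 ≠ 0)
    (hp_axis : p 1 = 0) (hq_line : ∃ t : ℝ, q = t • v)
    (r₁ : ℝ) (hr₁ : r₁ = ‖p - q‖) (hr₁pos : 0 < r₁)
    (P Q : Matrix (Fin 2) (Fin 2) ℝ)
    (hP : P = r₁ • !![v 0 / v 1, 1; 0, 0])
    (hQ : Q = P.transpose) :
    ∃ x : EuclideanSpace ℝ (Fin 2), ‖x‖ = 1 ∧ p = P.mulVec x ∧ q = Q.mulVec x := by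
  obtain ⟨t, ht⟩ := hq_line
  have hr₁ne : r₁ ≠ 0 := ne_of_gt hr₁pos
  set x : EuclideanSpace ℝ (Fin 2) :=
    WithLp.toLp 2 (show Fin 2 → ℝ from ![q 1 / r₁, (p 0 - q 0) / r₁]) with hx
  have hx0 : x 0 = q 1 / r₁ := rfl
  have hx1 : x 1 = (p 0 - q 0) / r₁ := rfl
  have hq0 : q 0 = t * v 0 := by rw [ht]; rfl
  have hq1 : q 1 = t * v 1 := by rw [ht]; rfl
  have hQ' : Q = r₁ • !![v 0 / v 1, 0; 1, 0] := by
    rw [hQ, hP]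
    ext i j
    fin_cases i <;> fin_cases j <;> simp
  have hr₁sq : r₁ ^ 2 = (p 0 - q 0) ^ 2 + q 1 ^ 2 := by
    have h1 := EuclideanSpace.norm_eq (p - q)
    rw [← hr₁] at h1
    have hsum : ∑ i : Fin 2, ‖(p - q) i‖ ^ 2 = (p 0 - q 0) ^ 2 + q 1 ^ 2 := by
      have e0 : (p - q) 0 = p 0 - q 0 := rfl
      have e1 : (p - q) 1 = p 1 - q 1 := rfl
      rw [Fin.sum_univ_two, e0, e1, hp_axis, Real.norm_eq_abs, Real.norm_eq_abs,
        sq_abs, sq_abs]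
      ring
    rw [hsum] at h1
    rw [h1, Real.sq_sqrt]
    positivity
  refine ⟨x, ?_, ?_, ?_⟩
  · rw [EuclideanSpace.norm_eq]
    have : ∑ i : Fin 2, ‖x i‖ ^ 2 = 1 := by
      rw [Fin.sum_univ_two, hx0, hx1]
      rw [Real.norm_eq_abs, Real.norm_eq_abs, sq_abs, sq_abs]
      field_simp
      linarith [hr₁sq]
    rw [this, Real.sqrt_one]
  · funext i
    fin_cases i <;>
      simp [hP, Matrix.mulVec, dotProduct, hx0, hx1, Fin.sum_univ_two]
    · field_simp
      rw [hq0, hq1]; ring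
    · exact hp_axis
  · funext i
    fin_cases i <;>
      simp [hQ', Matrix.mulVec, dotProduct, hx0, hx1, Fin.sum_univ_two] <;>
      field_simp <;> rw [hq0, hq1] <;> field_simp <;> ring
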